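/- Suppose a > 0, d > 0, b ≥ 0, x′(t) ≥ x(t)(b − a·x(t − τ(t))) + d for all t ≥ t₀, and there is a constant N > 0 with limsup_{t→+∞} x(t) ≤ N. Then liminf_{t→+∞} x(t) ≥ (b/a)·e^{−a·N·τ̄}. (Continuous-time case of Lemma 2.15(ii) / Lemma 2.14(ii).) -/

import Mathlib

open Filter

/-- Core estimate: under the hypotheses, for any `ε > 0` and any positive `c` with
`c * (a * exp (a*(N+ε)*τbar)) < b`, eventually `c ≤ x t`. -/
lemma delay_core (a b d t₀ τbar N ε c T₁ : ℝ) (τ x x' : ℝ → ℝ)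
    (ha : 0 < a) (hd : 0 < d) (hb : 0 ≤ b) (hτbar : 0 ≤ τbar)
    (hτ : ∀ t : ℝ, 0 ≤ τ t ∧ τ t ≤ τbar)
    (hxpos : ∀ t : ℝ, t₀ - τbar ≤ t → 0 < x t)
    (hderiv : ∀ t : ℝ, t₀ ≤ t → HasDerivAt x (x' t) t)
    (hineq : ∀ t : ℝ, t₀ ≤ t → x' t ≥ x t * (b - a * x (t - τ t)) + d)
    (hε : 0 < ε) (hN : 0 < N)
    (hT₁ : ∀ t, T₁ ≤ t → x t ≤ N + ε)
    (hc : 0 < c) (hcK : c * (a * Real.exp (a * (N + ε) * τbar)) < b) :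
    ∀ᶠ t in atTop, c ≤ x t := by
  set lam : ℝ := a * (N + ε) with hlam
  have hlam0 : 0 < lam := mul_pos ha (by linarith)
  set K : ℝ := Real.exp (lam * τbar) with hK
  have hK1 : 1 ≤ K := Real.one_le_exp (by positivity)
  have hK0 : 0 < K := lt_of_lt_of_le one_pos hK1
  set T₃ : ℝ := max t₀ (T₁ + τbar) with hT₃
  set T₄ : ℝ := T₃ + τbar with hT₄
  have hT₃t₀ : t₀ ≤ T₃ := le_max_left _ _
  have hT₄T₃ : T₃ ≤ T₄ := by simp [hT₄, hτbar]
  -- positivity on [t₀, ∞)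
  have hpos : ∀ t : ℝ, t₀ ≤ t → 0 < x t := fun t ht => hxpos t (by linarith)
  -- differential inequality x' ≥ -lam x on [T₃, ∞)
  have hgron : ∀ t : ℝ, T₃ ≤ t → -lam * x t ≤ x' t := by
    intro t ht
    have ht0 : t₀ ≤ t := le_trans hT₃t₀ ht
    have hts : T₁ ≤ t - τ t := by
      have h1 := (hτ t).2
      have h2 : T₁ + τbar ≤ t := le_trans (le_max_right _ _) ht
      linarith
    have hxs : x (t - τ t) ≤ N + ε := hT₁ _ hts
    have hxt : 0 < x t := hpos t ht0
    have h1 : x t * (b - lam) ≤ x t * (b - a * x (t - τ t)) := by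
      apply mul_le_mul_of_nonneg_left _ hxt.le
      have : a * x (t - τ t) ≤ a * (N + ε) := mul_le_mul_of_nonneg_left hxs ha.le
      simp only [hlam]; linarith
    have h2 := hineq t ht0
    nlinarith [mul_nonneg hxt.le hb]
  -- Gronwall: x t * exp (lam * t) is monotone on [T₃, ∞)
  set g : ℝ → ℝ := fun t => x t * Real.exp (lam * t) with hg
  have hgderiv : ∀ t : ℝ, t₀ ≤ t →
      HasDerivAt g (x' t * Real.exp (lam * t) + x t * (Real.exp (lam * t) * lam)) t := by
    intro t ht
    have he : HasDerivAt (fun t => Real.exp (lam * t)) (Real.exp (lam * t) * lam) t := by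
      simpa using ((hasDerivAt_id t).const_mul lam).exp
    exact (hderiv t ht).mul he
  have hgmono : MonotoneOn g (Set.Ici T₃) := by
    apply monotoneOn_of_deriv_nonneg (convex_Ici _)
    · intro t ht
      exact ((hgderiv t (le_trans hT₃t₀ ht)).continuousAt).continuousWithinAt
    · intro t ht
      rw [interior_Ici] at ht
      exact ((hgderiv t (le_trans hT₃t₀ ht.le)).differentiableAt).differentiableWithinAt
    · intro t ht
      rw [interior_Ici] at ht
      rw [(hgderiv t (le_trans hT₃t₀ ht.le)).deriv]
      have h1 := hgron t ht.le
      have h2 := (Real.exp_pos (lam * t)).le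
      nlinarith
  -- delayed term comparison on [T₄, ∞)
  have hdelay : ∀ t : ℝ, T₄ ≤ t → x (t - τ t) ≤ K * x t := by
    intro t ht
    have hτt := hτ t
    have hsT₃ : T₃ ≤ t - τ t := by simp only [hT₄] at ht; linarith [hτt.2]
    have hst : t - τ t ≤ t := by linarith [hτt.1]
    have hgle : g (t - τ t) ≤ g t :=
      hgmono hsT₃ (le_trans hsT₃ hst) hst
    have hexp : (0:ℝ) < Real.exp (lam * (t - τ t)) := Real.exp_pos _
    rw [hg] at hgle
    simp only at hgle
    have : x (t - τ t) ≤ x t * Real.exp (lam * t) / Real.exp (lam * (t - τ t)) :=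
      (le_div_iff₀ hexp).mpr hgle
    calc x (t - τ t) ≤ x t * Real.exp (lam * t) / Real.exp (lam * (t - τ t)) := this
      _ = x t * Real.exp (lam * t - lam * (t - τ t)) := by
          rw [Real.exp_sub, mul_div_assoc]
      _ = x t * Real.exp (lam * τ t) := by ring_nf
      _ ≤ x t * K := by
          apply mul_le_mul_of_nonneg_left _ (hpos t (by linarith [hT₃t₀, hT₄T₃])).le
          exact Real.exp_le_exp.mpr (mul_le_mul_of_nonneg_left hτt.2 hlam0.le)
      _ = K * x t := mul_comm _ _
  -- key scalar inequality on [T₄, ∞)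
  have hkey : ∀ t : ℝ, T₄ ≤ t → x t * (b - a * K * x t) + d ≤ x' t := by
    intro t ht
    have ht0 : t₀ ≤ t := by linarith [hT₃t₀, hT₄T₃]
    have hxt : 0 < x t := hpos t ht0
    have h1 := hdelay t ht
    have h2 := hineq t ht0
    nlinarith [mul_nonneg (mul_nonneg ha.le hxt.le) (sub_nonneg.mpr h1)]
  -- Step 1: there exists t₂ ≥ T₄ with c ≤ x t₂
  have hbc : a * K * c < b := by
    calc a * K * c = c * (a * K) := by ring
      _ < b := hcK
  obtain ⟨t₂, ht₂T₄, ht₂c⟩ : ∃ t₂, T₄ ≤ t₂ ∧ c ≤ x t₂ := by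
    by_contra hcon
    push_neg at hcon
    have hsmall : ∀ t, T₄ ≤ t → x t < c := fun t ht => hcon t ht
    have hd' : ∀ t, T₄ ≤ t → d ≤ x' t := by
      intro t ht
      have hxt : 0 < x t := hpos t (by linarith [hT₃t₀, hT₄T₃])
      have h1 := hkey t ht
      have h2 := hsmall t ht
      have h3 : a * K * x t < b := by
        nlinarith [mul_pos (mul_pos ha hK0) (sub_pos.mpr h2)]
      nlinarith [mul_nonneg hxt.le (by linarith : (0:ℝ) ≤ b - a * K * x t)]
    have hder : ∀ t : ℝ, t₀ ≤ t → HasDerivAt (fun t => x t - d * t) (x' t - d) t := by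
      intro t ht0
      exact ((hderiv t ht0).sub ((hasDerivAt_id' t).const_mul d)).congr_deriv (by ring)
    have hhmono : MonotoneOn (fun t => x t - d * t) (Set.Ici T₄) := by
      apply monotoneOn_of_deriv_nonneg (convex_Ici _)
      · intro t ht
        have ht0 : t₀ ≤ t := by
          simp only [Set.mem_Ici] at ht; linarith [hT₃t₀, hT₄T₃]
        exact ((hder t ht0).continuousAt).continuousWithinAt
      · intro t ht
        rw [interior_Ici] at ht
        have ht0 : t₀ ≤ t := by linarith [hT₃t₀, hT₄T₃, (Set.mem_Ioi.mp ht).le]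
        exact ((hder t ht0).differentiableAt).differentiableWithinAt
      · intro t ht
        rw [interior_Ici] at ht
        have ht0 : t₀ ≤ t := by linarith [hT₃t₀, hT₄T₃, (Set.mem_Ioi.mp ht).le]
        rw [(hder t ht0).deriv]
        linarith [hd' t ht.le]
    have hcd0 : 0 < c / d := div_pos hc hd
    have key := hhmono (Set.mem_Ici.mpr le_rfl : T₄ ∈ Set.Ici T₄)
      (Set.mem_Ici.mpr (by linarith : T₄ ≤ T₄ + c / d)) (by linarith : T₄ ≤ T₄ + c / d)
    simp only at key
    have hxT₄ : 0 < x T₄ := hpos T₄ (by linarith [hT₃t₀, hT₄T₃])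
    have hxt₃ : x (T₄ + c / d) < c := hsmall _ (by linarith)
    have hcd : d * (c / d) = c := by field_simp
    nlinarith
  -- Step 2: barrier — x stays ≥ c after t₂
  have hbarrier : ∀ u, t₂ ≤ u → c ≤ x u := by
    intro u hu
    by_contra hxu
    push_neg at hxu
    have hut₂ : t₂ < u := by
      rcases lt_or_eq_of_le hu with h | h
      · exact h
      · exfalso; rw [← h] at hxu; linarith
    set S : Set ℝ := Set.Icc t₂ u ∩ x ⁻¹' Set.Ici c with hS
    have hScont : ContinuousOn x (Set.Icc t₂ u) := by
      intro t ht
      have ht0 : t₀ ≤ t := by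
        have := ht.1; simp only [Set.mem_Icc] at ht; linarith [hT₃t₀, hT₄T₃, ht.1]
      exact ((hderiv t ht0).continuousAt).continuousWithinAt
    have hSclosed : IsClosed S :=
      hScont.preimage_isClosed_of_isClosed isClosed_Icc isClosed_Ici
    have hScompact : IsCompact S :=
      isCompact_Icc.of_isClosed_subset hSclosed Set.inter_subset_left
    have hSne : S.Nonempty := ⟨t₂, ⟨le_refl _, hut₂.le⟩, ht₂c⟩
    set s : ℝ := sSup S with hs
    have hsS : s ∈ S := hScompact.sSup_mem hSne
    have hst₂ : t₂ ≤ s := hsS.1.1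
    have hsu : s ≤ u := hsS.1.2
    have hxsc : c ≤ x s := hsS.2
    have hsu' : s < u := by
      rcases lt_or_eq_of_le hsu with h | h
      · exact h
      · exfalso; rw [h] at hxsc; linarith
    have hs0 : t₀ ≤ s := by linarith [hT₃t₀, hT₄T₃, ht₂T₄]
    -- for t in (s, u], x t < c
    have habove : ∀ t ∈ Set.Ioc s u, x t < c := by
      intro t ht
      by_contra hge
      push_neg at hge
      have : t ∈ S := ⟨⟨le_trans hst₂ ht.1.le, ht.2⟩, hge⟩
      have := le_csSup hScompact.bddAbove this
      exact absurd (lt_of_lt_of_le ht.1 this) (lt_irrefl _)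
    -- continuity from the right gives x s ≤ c, hence x s = c
    have hmem : Set.Ioc s u ∈ nhdsWithin s (Set.Ioi s) :=
      Ioc_mem_nhdsGT hsu'
    have hxs_le : x s ≤ c := by
      have hcont : Filter.Tendsto x (nhdsWithin s (Set.Ioi s)) (nhds (x s)) :=
        Filter.Tendsto.mono_left ((hderiv s hs0).continuousAt) nhdsWithin_le_nhds
      exact le_of_tendsto hcont (Filter.eventually_of_mem hmem fun t ht => (habove t ht).le)
    have hxseq : x s = c := le_antisymm hxs_le hxsc
    -- derivative at s is nonpositive
    have hslope : Filter.Tendsto (slope x s) (nhdsWithin s {s}ᶜ) (nhds (x' s)) :=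
      hasDerivAt_iff_tendsto_slope.mp (hderiv s hs0)
    have hslope' : Filter.Tendsto (slope x s) (nhdsWithin s (Set.Ioi s)) (nhds (x' s)) :=
      hslope.mono_left (nhdsWithin_mono _ (fun t ht => ne_of_gt ht))
    have hxs'le : x' s ≤ 0 := by
      apply le_of_tendsto hslope'
      apply Filter.eventually_of_mem hmem
      intro t ht
      have h1 : x t < c := habove t ht
      have h2 : 0 < t - s := sub_pos.mpr ht.1
      rw [slope_def_field]
      apply div_nonpos_of_nonpos_of_nonneg
      · rw [hxseq]; linarith
      · linarith
    -- but the key inequality forces x' s > 0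
    have hkey' := hkey s (by linarith [ht₂T₄])
    rw [hxseq] at hkey'
    nlinarith
  exact Filter.eventually_atTop.mpr ⟨t₂, hbarrier⟩

/-- Continuous-time case of Lemma 2.15(ii)/2.14(ii): if
`x′(t) ≥ x(t)(b − a x(t − τ(t))) + d` for `t ≥ t₀` and `limsup_{t→∞} x(t) ≤ N`,
then `liminf_{t→∞} x(t) ≥ (b/a) e^{−a N τ̄}`. -/
theorem liminf_ge_of_delay_ineq_continuous
    (a b d t₀ τbar N : ℝ) (τ x x' : ℝ → ℝ)
    (ha : 0 < a) (hd : 0 < d) (hb : 0 ≤ b) (hτbar : 0 ≤ τbar)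
    (hτcont : Continuous τ) (hτ : ∀ t : ℝ, 0 ≤ τ t ∧ τ t ≤ τbar)
    (hxcont : ContinuousOn x (Set.Ici (t₀ - τbar)))
    (hxpos : ∀ t : ℝ, t₀ - τbar ≤ t → 0 < x t)
    (hderiv : ∀ t : ℝ, t₀ ≤ t → HasDerivAt x (x' t) t)
    (hineq : ∀ t : ℝ, t₀ ≤ t → x' t ≥ x t * (b - a * x (t - τ t)) + d)
    (hN : 0 < N)
    (hbound : Filter.limsup (fun t : ℝ => ((x t : EReal))) Filter.atTop ≤ ((N : ℝ) : EReal)) :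
    ((b / a * Real.exp (-(a * N * τbar)) : ℝ) : EReal) ≤
      Filter.liminf (fun t : ℝ => ((x t : EReal))) Filter.atTop := by
  set r : ℝ := b / a * Real.exp (-(a * N * τbar)) with hr
  by_contra hcon
  push_neg at hcon
  obtain ⟨c, hLc, hcr⟩ := EReal.exists_between_coe_real hcon
  have hcr' : c < r := EReal.coe_lt_coe_iff.mp hcr
  -- it suffices to show eventually c ≤ x t
  suffices hev : ∀ᶠ t in atTop, c ≤ x t by
    have : ((c : ℝ) : EReal) ≤ Filter.liminf (fun t : ℝ => ((x t : EReal))) Filter.atTop :=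
      Filter.le_liminf_of_le (by isBoundedDefault)
        (hev.mono fun t ht => EReal.coe_le_coe_iff.mpr ht)
    exact absurd (lt_of_le_of_lt this hLc) (lt_irrefl _)
  rcases le_or_gt c 0 with hc0 | hc0
  · -- trivial: x is eventually positive
    filter_upwards [Filter.eventually_ge_atTop t₀] with t ht
    exact le_trans hc0 (hxpos t (by linarith)).le
  -- choose ε > 0 with c * (a * exp (a*(N+ε)*τbar)) < b
  obtain ⟨ε, hε0, hεb⟩ : ∃ ε : ℝ, 0 < ε ∧ c * (a * Real.exp (a * (N + ε) * τbar)) < b := by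
    have hφ0 : c * (a * Real.exp (a * (N + 0) * τbar)) < b := by
      have hE : (0:ℝ) < Real.exp (a * N * τbar) := Real.exp_pos _
      have h1 : c * (a * Real.exp (a * N * τbar)) <
          (b / a * Real.exp (-(a * N * τbar))) * (a * Real.exp (a * N * τbar)) := by
        rw [hr] at hcr'
        exact mul_lt_mul_of_pos_right hcr' (by positivity)
      have h2 : (b / a * Real.exp (-(a * N * τbar))) * (a * Real.exp (a * N * τbar)) = b := by
        rw [Real.exp_neg]
        field_simp
      rw [add_zero]
      rw [h2] at h1
      exact h1
    have hcont : Continuous fun ε : ℝ => c * (a * Real.exp (a * (N + ε) * τbar)) := by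
      continuity
    have htend : Filter.Tendsto (fun ε : ℝ => c * (a * Real.exp (a * (N + ε) * τbar)))
        (nhdsWithin 0 (Set.Ioi 0)) (nhds (c * (a * Real.exp (a * (N + 0) * τbar)))) :=
      (hcont.tendsto 0).mono_left nhdsWithin_le_nhds
    have hevε : ∀ᶠ ε in nhdsWithin (0:ℝ) (Set.Ioi 0),
        c * (a * Real.exp (a * (N + ε) * τbar)) < b :=
      htend.eventually_lt_const hφ0
    have hevε' : ∀ᶠ ε in nhdsWithin (0:ℝ) (Set.Ioi 0), 0 < ε :=
      eventually_mem_nhdsWithin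
    obtain ⟨ε, hε1, hε2⟩ := (hevε'.and hevε).exists
    exact ⟨ε, hε1, hε2⟩
  -- get T₁ from the limsup bound
  have hNε : Filter.limsup (fun t : ℝ => ((x t : EReal))) Filter.atTop < ((N + ε : ℝ) : EReal) :=
    lt_of_le_of_lt hbound (EReal.coe_lt_coe_iff.mpr (by linarith))
  have hevT : ∀ᶠ t in atTop, x t ≤ N + ε := by
    filter_upwards [Filter.eventually_lt_of_limsup_lt hNε] with t ht
    exact (EReal.coe_lt_coe_iff.mp ht).le
  obtain ⟨T₁, hT₁⟩ := Filter.eventually_atTop.mp hevT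
  exact delay_core a b d t₀ τbar N ε c T₁ τ x x' ha hd hb hτbar hτ hxpos hderiv hineq
    hε0 hN hT₁ hc0 hεb
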